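/- Let C be a real n×m matrix (m ≤ n), let W be a real m×m symmetric positive definite matrix, and let r ≤ m be a positive integer. Let C = QR be a thin QR decomposition, where Q is n×m with orthonormal columns (QᵀQ = I_m) and R is m×m upper triangular, and let RW⁻¹Rᵀ = V′Σ′V′ᵀ be a spectral decomposition with V′ an m×m orthogonal matrix and Σ′ an m×m diagonal matrix whose diagonal entries are nonnegative and nonincreasing. Write V′_r for the first r columns of V′ and Σ′_r for the leading r×r block of Σ′. Then: (i) QV′ has orthonormal columns; (ii) CW⁻¹Cᵀ = (QV′)Σ′(QV′)ᵀ; and (iii) for every real n×n matrix G′ with rank(G′) ≤ r, ‖CW⁻¹Cᵀ − (QV′_r)Σ′_r(QV′_r)ᵀ‖_F ≤ ‖CW⁻¹Cᵀ − G′‖_F, i.e. (QV′_r)Σ′_r(QV′_r)ᵀ is a best rank-r approximation of CW⁻¹Cᵀ in the Frobenius norm. -/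

import Mathlib

open Matrix

/-- Frobenius norm of a real matrix: ‖A‖_F = sqrt(trace(Aᵀ A)). -/
noncomputable def frobNorm {α β : Type*} [Fintype α] [Fintype β] (A : Matrix α β ℝ) : ℝ :=
  Real.sqrt (Matrix.trace (Aᵀ * A))

open Finset in
lemma trace_tr_mul_self_nonneg {α β : Type*} [Fintype α] [Fintype β]
    (N : Matrix α β ℝ) : 0 ≤ Matrix.trace (Nᵀ * N) := by
  simp only [Matrix.trace, Matrix.diag, Matrix.mul_apply, Matrix.transpose_apply]
  exact Finset.sum_nonneg fun j _ => Finset.sum_nonneg fun i _ => mul_self_nonneg _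

lemma diag_mul_tr_nonneg {α β : Type*} [Fintype α] [Fintype β]
    (N : Matrix α β ℝ) (i : α) : 0 ≤ (N * Nᵀ) i i := by
  simp only [Matrix.mul_apply, Matrix.transpose_apply]
  exact Finset.sum_nonneg fun j _ => mul_self_nonneg _

lemma key_sum {m r : ℕ} (hrm : r ≤ m) (μ c : Fin m → ℝ) (hμ0 : ∀ i, 0 ≤ μ i)
    (hμ : Antitone μ) (hc0 : ∀ i, 0 ≤ c i) (hc1 : ∀ i, c i ≤ 1)
    (hsum : ∑ i, c i ≤ (r : ℝ)) :
    ∑ i, μ i * c i ≤ ∑ i ∈ Finset.univ.filter (fun i : Fin m => (i : ℕ) < r), μ i := by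
  set A := Finset.univ.filter (fun i : Fin m => (i : ℕ) < r) with hA
  have hcardA : A.card = r := by
    have : A = Finset.map (Fin.castLEEmb hrm) Finset.univ := by
      ext i
      simp only [hA, Finset.mem_filter, Finset.mem_univ, true_and, Finset.mem_map,
        Fin.castLEEmb, Function.Embedding.coeFn_mk]
      constructor
      · intro h; exact ⟨⟨i, h⟩, by simp [Fin.castLE]⟩
      · rintro ⟨k, rfl⟩; simpa using k.isLt
    simp [this]
  by_cases hrm' : r < m
  · set t := μ ⟨r, hrm'⟩ with ht
    have ht0 : 0 ≤ t := hμ0 _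
    have h1 : ∑ i ∈ Aᶜ, μ i * c i ≤ t * ∑ i ∈ Aᶜ, c i := by
      rw [Finset.mul_sum]
      refine Finset.sum_le_sum fun i hi => ?_
      have : ¬ (i : ℕ) < r := by simpa [hA] using hi
      exact mul_le_mul_of_nonneg_right (hμ (Fin.le_def.mpr (not_lt.mp this))) (hc0 i)
    have h2 : ∑ i ∈ Aᶜ, c i ≤ ∑ i ∈ A, (1 - c i) := by
      have := Finset.sum_add_sum_compl A c
      have hAc : ∑ i ∈ A, (1 - c i) = r - ∑ i ∈ A, c i := by
        rw [Finset.sum_sub_distrib, Finset.sum_const, hcardA]; simp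
      rw [hAc]
      linarith [Finset.sum_add_sum_compl A c]
    have h3 : t * ∑ i ∈ A, (1 - c i) ≤ ∑ i ∈ A, μ i * (1 - c i) := by
      rw [Finset.mul_sum]
      refine Finset.sum_le_sum fun i hi => ?_
      have hir : (i : ℕ) < r := by simpa [hA] using hi
      have : t ≤ μ i := hμ (Fin.le_def.mpr hir.le)
      nlinarith [hc1 i]
    have h4 : ∑ i ∈ A, μ i * c i + ∑ i ∈ A, μ i * (1 - c i) = ∑ i ∈ A, μ i := by
      rw [← Finset.sum_add_distrib]; congr 1; ext i; ring
    have := Finset.sum_add_sum_compl A (fun i => μ i * c i)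
    nlinarith [mul_le_mul_of_nonneg_left h2 ht0]
  · have hAu : A = Finset.univ := by
      ext i
      simp only [hA, Finset.mem_filter, Finset.mem_univ, true_and, iff_true]
      exact i.isLt.trans_le (not_lt.mp hrm')
    rw [hAu]
    exact Finset.sum_le_sum fun i _ => by nlinarith [hc1 i, hμ0 i, hc0 i]

open Finset in
lemma exists_proj {n r : ℕ} (G : Matrix (Fin n) (Fin n) ℝ) (hG : G.rank ≤ r) :
    ∃ (s : ℕ) (X : Matrix (Fin n) (Fin s) ℝ), s ≤ r ∧ Xᵀ * X = 1 ∧ X * Xᵀ * G = G := by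
  classical
  set e := WithLp.linearEquiv 2 ℝ (Fin n → ℝ) with he
  set S : Submodule ℝ (EuclideanSpace ℝ (Fin n)) :=
    Submodule.span ℝ (Set.range fun j => e.symm (Gᵀ j)) with hS
  have hmapS : S.map (e : EuclideanSpace ℝ (Fin n) →ₗ[ℝ] (Fin n → ℝ)) =
      Submodule.span ℝ (Set.range Gᵀ) := by
    rw [hS, Submodule.map_span]
    congr 1
    ext x
    simp only [Set.mem_image, Set.mem_range]
    constructor
    · rintro ⟨y, ⟨j, rfl⟩, rfl⟩; exact ⟨j, by simp⟩
    · rintro ⟨j, rfl⟩; exact ⟨e.symm (Gᵀ j), ⟨j, rfl⟩, by simp⟩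
  have hfinS : Module.finrank ℝ S ≤ r := by
    have h1 : Module.finrank ℝ S =
        Module.finrank ℝ (Submodule.span ℝ (Set.range Gᵀ)) := by
      rw [← hmapS]
      exact (LinearEquiv.finrank_map_eq e S).symm
    rw [h1]
    exact (Matrix.rank_eq_finrank_span_cols G).symm.trans_le hG
  set s := Module.finrank ℝ S with hs
  set b := stdOrthonormalBasis ℝ S with hb
  refine ⟨s, Matrix.of fun i k => e ((b k : EuclideanSpace ℝ (Fin n))) i, hfinS, ?_, ?_⟩
  · ext k l
    have horth := b.orthonormal
    rw [orthonormal_iff_ite] at horth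
    have hin : (inner (𝕜 := ℝ) ((b k : EuclideanSpace ℝ (Fin n))) ((b l : EuclideanSpace ℝ (Fin n)))) =
        ∑ i, e ((b k : EuclideanSpace ℝ (Fin n))) i * e ((b l : EuclideanSpace ℝ (Fin n))) i := by
      simp [PiLp.inner_apply, RCLike.inner_apply, he]
      exact Finset.sum_congr rfl fun _ _ => mul_comm _ _
    have := horth k l
    rw [← Submodule.coe_inner, this] at hin
    simp only [Matrix.mul_apply, Matrix.transpose_apply, Matrix.of_apply]
    rw [← hin]
    by_cases hkl : k = l <;> simp [hkl, Matrix.one_apply]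
  · ext i j
    have hmem : e.symm (Gᵀ j) ∈ S := Submodule.subset_span ⟨j, rfl⟩
    set w : S := ⟨e.symm (Gᵀ j), hmem⟩ with hw
    have hrepr := b.sum_repr' w
    have hcoe : ((∑ k, (inner (𝕜 := ℝ) (b k) w : ℝ) • b k : S) : EuclideanSpace ℝ (Fin n)) =
        e.symm (Gᵀ j) := by rw [hrepr]
    have hcoe2 : (∑ k, (inner (𝕜 := ℝ) (b k) w : ℝ) • ((b k : EuclideanSpace ℝ (Fin n)))) =
        e.symm (Gᵀ j) := by
      rw [← hcoe]; push_cast [Submodule.coe_sum, Submodule.coe_smul]; rfl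
    have happ : ∀ i, ∑ k, (inner (𝕜 := ℝ) (b k) w : ℝ) * e ((b k : EuclideanSpace ℝ (Fin n))) i
        = G i j := by
      intro i
      have := congrArg (fun v => e v i) hcoe2
      simpa [map_sum, he] using this
    have hinner : ∀ k, (inner (𝕜 := ℝ) (b k) w : ℝ) =
        ∑ l, e ((b k : EuclideanSpace ℝ (Fin n))) l * G l j := by
      intro k
      rw [Submodule.coe_inner]
      simp only [hw]
      simp [PiLp.inner_apply, RCLike.inner_apply, he]
      exact Finset.sum_congr rfl fun _ _ => mul_comm _ _
    have := happ i
    simp only [hinner] at this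
    simp only [Matrix.mul_apply, Matrix.transpose_apply, Matrix.of_apply]
    rw [← this]
    simp_rw [Finset.sum_mul]
    rw [Finset.sum_comm]
    refine Finset.sum_congr rfl fun k _ => Finset.sum_congr rfl fun l _ => by ring

open Finset in
lemma EY_main {n m r : ℕ} (hrm : r ≤ m)
    (U : Matrix (Fin n) (Fin m) ℝ) (hU : Uᵀ * U = 1)
    (d : Fin m → ℝ) (hd : ∀ i, 0 ≤ d i) (hmono : Antitone d)
    (G : Matrix (Fin n) (Fin n) ℝ) (hG : G.rank ≤ r) :
    ∑ i ∈ Finset.univ.filter (fun i : Fin m => ¬ (i : ℕ) < r), d i ^ 2 ≤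
      Matrix.trace ((U * Matrix.diagonal d * Uᵀ - G)ᵀ * (U * Matrix.diagonal d * Uᵀ - G)) := by
  classical
  obtain ⟨s, X, hsr, hX1, hXG⟩ := exists_proj G hG
  set D := Matrix.diagonal d with hD
  set A := U * D * Uᵀ with hA
  set P := X * Xᵀ with hP
  have hXX : ∀ (p : Type) [Fintype p] (B : Matrix (Fin s) p ℝ), Xᵀ * (X * B) = B := by
    intro p _ B; rw [← Matrix.mul_assoc, hX1, Matrix.one_mul]
  have hUmul : ∀ (p : Type) [Fintype p] (B : Matrix (Fin m) p ℝ), Uᵀ * (U * B) = B := by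
    intro p _ B; rw [← Matrix.mul_assoc, hU, Matrix.one_mul]
  have hPP : P * P = P := by
    rw [hP]; simp only [Matrix.mul_assoc]; rw [hXX]
  have hPT : Pᵀ = P := by rw [hP, transpose_mul, transpose_transpose]
  set M := A - G with hM
  -- decomposition of trace
  have hdec : Mᵀ * M = (Xᵀ * M)ᵀ * (Xᵀ * M) + ((1 - P) * M)ᵀ * ((1 - P) * M) := by
    have h1 : (Xᵀ * M)ᵀ * (Xᵀ * M) = Mᵀ * P * M := by
      rw [transpose_mul, transpose_transpose, hP]; simp only [Matrix.mul_assoc]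
    have h2 : ((1 - P) * M)ᵀ * ((1 - P) * M) = Mᵀ * M - Mᵀ * P * M := by
      have hQT : (1 - P)ᵀ = 1 - P := by rw [transpose_sub, transpose_one, hPT]
      rw [transpose_mul, hQT]
      have e : Mᵀ * (1 - P) * ((1 - P) * M) = Mᵀ * ((1 - P) * (1 - P)) * M := by
        simp only [Matrix.mul_assoc]
      have eproj : (1 - P) * (1 - P) = 1 - P := by
        rw [Matrix.sub_mul, Matrix.mul_sub, Matrix.mul_sub, hPP]; simp
      rw [e, eproj]
      noncomm_ring
    rw [h1, h2]; abel
  have hQproj : (1 - P) * (1 - P) = (1 - P) := by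
    rw [Matrix.sub_mul, Matrix.mul_sub, Matrix.mul_sub, hPP]; simp
  -- (1-P) M = (1-P) A
  have hPM : (1 - P) * M = (1 - P) * A := by
    rw [hM, Matrix.mul_sub]
    have : (1 - P) * G = 0 := by rw [Matrix.sub_mul, Matrix.one_mul, hXG, sub_self]
    rw [this, sub_zero]
  have hAT : Aᵀ = A := by
    rw [hA]
    simp only [transpose_mul, transpose_transpose, hD, Matrix.diagonal_transpose]
    rw [Matrix.mul_assoc]
  have sandwich : ∀ B C' : Matrix (Fin m) (Fin m) ℝ,
      (U * B * Uᵀ) * (U * C' * Uᵀ) = U * (B * C') * Uᵀ := by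
    intro B C'
    simp only [Matrix.mul_assoc]
    rw [hUmul]
  have trace_sandwich : ∀ B : Matrix (Fin m) (Fin m) ℝ,
      Matrix.trace (U * B * Uᵀ) = Matrix.trace B := by
    intro B
    rw [Matrix.trace_mul_comm, ← Matrix.mul_assoc, hU, Matrix.one_mul]
  have step1 : Matrix.trace (((1 - P) * A)ᵀ * ((1 - P) * A)) ≤ Matrix.trace (Mᵀ * M) := by
    rw [hdec, Matrix.trace_add, ← hPM]
    have := trace_tr_mul_self_nonneg (Xᵀ * M)
    linarith
  set Y := Uᵀ * X with hY
  set c : Fin m → ℝ := fun i => (Y * Yᵀ) i i with hc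
  have hLL : Matrix.trace (((1 - P) * A)ᵀ * ((1 - P) * A)) =
      Matrix.trace (A * A) - Matrix.trace (Xᵀ * (A * A) * X) := by
    have h0 : ((1 - P) * A)ᵀ * ((1 - P) * A) = Aᵀ * ((1 - P) * A) := by
      rw [transpose_mul, transpose_sub, transpose_one, hPT, Matrix.mul_assoc,
        ← Matrix.mul_assoc (1 - P), hQproj]
    have e1 : Aᵀ * ((1 - P) * A) = A * A - A * (P * A) := by
      rw [hAT]; noncomm_ring
    rw [h0, e1, Matrix.trace_sub]
    congr 1
    calc Matrix.trace (A * (P * A)) = Matrix.trace ((A * X) * (Xᵀ * A)) := by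
          rw [hP]; simp only [Matrix.mul_assoc]
    _ = Matrix.trace ((Xᵀ * A) * (A * X)) := Matrix.trace_mul_comm _ _
    _ = Matrix.trace (Xᵀ * (A * A) * X) := by simp only [Matrix.mul_assoc]
  have hAA : Matrix.trace (A * A) = ∑ i, d i ^ 2 := by
    rw [hA, sandwich, trace_sandwich, hD, Matrix.diagonal_mul_diagonal,
      Matrix.trace_diagonal]
    exact Finset.sum_congr rfl fun i _ => (sq (d i)).symm
  have hXAAX : Matrix.trace (Xᵀ * (A * A) * X) = ∑ i, d i ^ 2 * c i := by
    have h1 : Xᵀ * (A * A) * X = Yᵀ * (D * D) * Y := by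
      rw [hA, sandwich, hY, transpose_mul, transpose_transpose]
      simp only [Matrix.mul_assoc]
    rw [h1, Matrix.trace_mul_comm (Yᵀ * (D * D)) Y, ← Matrix.mul_assoc,
      Matrix.trace_mul_comm (Y * Yᵀ) (D * D)]
    rw [hD, Matrix.diagonal_mul_diagonal, Matrix.trace]
    refine Finset.sum_congr rfl fun i _ => ?_
    rw [Matrix.diag, Matrix.diagonal_mul, hc]
    rw [sq]
  have hc0 : ∀ i, 0 ≤ c i := fun i => diag_mul_tr_nonneg Y i
  have hc1 : ∀ i, c i ≤ 1 := by
    intro i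
    have hN : (Uᵀ * (1 - P)) * (Uᵀ * (1 - P))ᵀ = 1 - Y * Yᵀ := by
      rw [transpose_mul, transpose_sub, transpose_one, hPT, transpose_transpose]
      calc Uᵀ * (1 - P) * ((1 - P) * U) = Uᵀ * ((1 - P) * (1 - P)) * U := by
            simp only [Matrix.mul_assoc]
      _ = Uᵀ * (1 - P) * U := by rw [hQproj]
      _ = 1 - Y * Yᵀ := by
          rw [Matrix.mul_sub, Matrix.mul_one, Matrix.sub_mul, hU, hP, hY, transpose_mul,
            transpose_transpose]
          simp only [Matrix.mul_assoc]
    have := diag_mul_tr_nonneg (Uᵀ * (1 - P)) i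
    rw [hN] at this
    simp only [Matrix.sub_apply, Matrix.one_apply_eq] at this
    rw [hc]; simp only; linarith
  have hcsum : ∑ i, c i ≤ (r : ℝ) := by
    have h1 : ∑ i, c i = Matrix.trace (Yᵀ * Y) := by
      rw [← Matrix.trace_mul_comm Y Yᵀ]
      simp [Matrix.trace, Matrix.diag, hc]
    have hUUproj : (1 - U * Uᵀ) * (1 - U * Uᵀ) = 1 - U * Uᵀ := by
      have e : (U * Uᵀ) * (U * Uᵀ) = U * Uᵀ := by
        simp only [Matrix.mul_assoc]; rw [hUmul]
      rw [Matrix.sub_mul, Matrix.mul_sub, Matrix.mul_sub, e]; simp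
    have hNN : ((1 - U * Uᵀ) * X)ᵀ * ((1 - U * Uᵀ) * X) = 1 - Yᵀ * Y := by
      rw [transpose_mul, transpose_sub, transpose_one, transpose_mul, transpose_transpose]
      calc Xᵀ * (1 - U * Uᵀ) * ((1 - U * Uᵀ) * X)
          = Xᵀ * ((1 - U * Uᵀ) * (1 - U * Uᵀ)) * X := by simp only [Matrix.mul_assoc]
      _ = Xᵀ * (1 - U * Uᵀ) * X := by rw [hUUproj]
      _ = 1 - Yᵀ * Y := by
          rw [Matrix.mul_sub, Matrix.mul_one, Matrix.sub_mul, hX1, hY, transpose_mul,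
            transpose_transpose]
          simp only [Matrix.mul_assoc]
    have h2 := trace_tr_mul_self_nonneg ((1 - U * Uᵀ) * X)
    rw [hNN, Matrix.trace_sub, Matrix.trace_one] at h2
    have h3 : Matrix.trace (Yᵀ * Y) ≤ (s : ℝ) := by simpa using h2
    have h4 : (s : ℝ) ≤ (r : ℝ) := Nat.cast_le.mpr hsr
    linarith [h1 ▸ h3]
  have hkey := key_sum hrm (fun i => d i ^ 2) c (fun i => sq_nonneg _)
    (fun i j hij => pow_le_pow_left₀ (hd j) (hmono hij) 2) hc0 hc1 hcsum
  have hsplit := Finset.sum_filter_add_sum_filter_not Finset.univ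
    (fun i : Fin m => (i : ℕ) < r) (fun i => d i ^ 2)
  rw [hLL, hAA, hXAAX] at step1
  linarith

open Finset in
theorem stmt_1 {n m r : ℕ} (hmn : m ≤ n) (hr : 0 < r) (hrm : r ≤ m)
    (C : Matrix (Fin n) (Fin m) ℝ) (W : Matrix (Fin m) (Fin m) ℝ)
    (hW : W.PosDef)
    -- thin QR decomposition C = Q R
    (Q : Matrix (Fin n) (Fin m) ℝ) (R : Matrix (Fin m) (Fin m) ℝ)
    (hQR : C = Q * R) (hQ : Qᵀ * Q = 1) (hR : R.BlockTriangular id)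
    -- spectral decomposition R W⁻¹ Rᵀ = V' Σ' V'ᵀ
    (V' : Matrix (Fin m) (Fin m) ℝ) (d : Fin m → ℝ)
    (hV' : V'ᵀ * V' = 1) (hd : ∀ i, 0 ≤ d i) (hmono : Antitone d)
    (hspec : R * W⁻¹ * Rᵀ = V' * Matrix.diagonal d * V'ᵀ) :
    ((Q * V')ᵀ * (Q * V') = 1) ∧
    (C * W⁻¹ * Cᵀ = (Q * V') * Matrix.diagonal d * (Q * V')ᵀ) ∧
    (∀ G' : Matrix (Fin n) (Fin n) ℝ, G'.rank ≤ r →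
      frobNorm (C * W⁻¹ * Cᵀ -
          (Q * V'.submatrix id (Fin.castLE hrm)) *
            Matrix.diagonal (fun i : Fin r => d (Fin.castLE hrm i)) *
          (Q * V'.submatrix id (Fin.castLE hrm))ᵀ)
        ≤ frobNorm (C * W⁻¹ * Cᵀ - G')) := by
  classical
  set U := Q * V' with hUdef
  have hU : Uᵀ * U = 1 := by
    rw [hUdef, transpose_mul, Matrix.mul_assoc, ← Matrix.mul_assoc Qᵀ, hQ,
      Matrix.one_mul, hV']
  have hCW : C * W⁻¹ * Cᵀ = U * Matrix.diagonal d * Uᵀ := by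
    rw [hQR, transpose_mul]
    calc Q * R * W⁻¹ * (Rᵀ * Qᵀ) = Q * (R * W⁻¹ * Rᵀ) * Qᵀ := by
          simp only [Matrix.mul_assoc]
    _ = Q * (V' * Matrix.diagonal d * V'ᵀ) * Qᵀ := by rw [hspec]
    _ = U * Matrix.diagonal d * Uᵀ := by
          rw [hUdef, transpose_mul]; simp only [Matrix.mul_assoc]
  refine ⟨hU, hCW, ?_⟩
  intro G' hG'
  -- the truncated matrix equals U * diagonal e * Uᵀ
  set e : Fin m → ℝ := fun i => if (i : ℕ) < r then d i else 0 with he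
  have hsub : Q * V'.submatrix id (Fin.castLE hrm) = U.submatrix id (Fin.castLE hrm) := by
    ext i k
    simp [hUdef, Matrix.mul_apply, Matrix.submatrix_apply]
  have htrunc : (Q * V'.submatrix id (Fin.castLE hrm)) *
      Matrix.diagonal (fun i : Fin r => d (Fin.castLE hrm i)) *
      (Q * V'.submatrix id (Fin.castLE hrm))ᵀ = U * Matrix.diagonal e * Uᵀ := by
    rw [hsub]
    ext i j
    simp only [Matrix.mul_apply, Matrix.transpose_apply, Matrix.submatrix_apply,
      Matrix.diagonal_apply, id_eq]
    simp only [mul_ite, mul_zero, ite_mul, zero_mul, Finset.sum_ite_eq',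
      Finset.mem_univ, if_true]
    have himg : Finset.univ.filter (fun k : Fin m => (k : ℕ) < r) =
        Finset.image (Fin.castLE hrm) Finset.univ := by
      ext k
      simp only [Finset.mem_filter, Finset.mem_univ, true_and, Finset.mem_image]
      constructor
      · intro h
        refine ⟨⟨(k : ℕ), h⟩, ?_⟩
        ext
        simp [Fin.castLE]
      · rintro ⟨a, rfl⟩; exact a.isLt
    rw [← Finset.sum_subset (Finset.filter_subset (fun k : Fin m => (k : ℕ) < r)
        Finset.univ) (fun k _ hk => by
          simp only [Finset.mem_filter, Finset.mem_univ, true_and] at hk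
          simp [he, hk])]
    rw [himg, Finset.sum_image (fun a _ b _ hab => Fin.castLE_injective hrm hab)]
    refine Finset.sum_congr rfl fun k _ => ?_
    have hkr : ((Fin.castLE hrm k : Fin m) : ℕ) < r := by simpa using k.isLt
    simp [he, hkr]
  rw [hCW, htrunc]
  -- A - A_r = U * diagonal (d - e) * Uᵀ and its trace
  have hdiff : U * Matrix.diagonal d * Uᵀ - U * Matrix.diagonal e * Uᵀ =
      U * Matrix.diagonal (fun i => d i - e i) * Uᵀ := by
    rw [← Matrix.diagonal_sub]
    rw [Matrix.mul_sub, Matrix.sub_mul]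
  have hLHS : Matrix.trace ((U * Matrix.diagonal d * Uᵀ - U * Matrix.diagonal e * Uᵀ)ᵀ *
      (U * Matrix.diagonal d * Uᵀ - U * Matrix.diagonal e * Uᵀ)) =
      ∑ i ∈ Finset.univ.filter (fun i : Fin m => ¬ (i : ℕ) < r), d i ^ 2 := by
    rw [hdiff]
    set f : Fin m → ℝ := fun i => d i - e i with hf
    have h1 : (U * Matrix.diagonal f * Uᵀ)ᵀ = U * Matrix.diagonal f * Uᵀ := by
      simp only [transpose_mul, transpose_transpose, Matrix.diagonal_transpose,
        Matrix.mul_assoc, hUdef]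
    rw [h1]
    have h2 : (U * Matrix.diagonal f * Uᵀ) * (U * Matrix.diagonal f * Uᵀ) =
        U * (Matrix.diagonal f * Matrix.diagonal f) * Uᵀ := by
      have : Uᵀ * (U * (Matrix.diagonal f * Uᵀ)) = Matrix.diagonal f * Uᵀ := by
        rw [← Matrix.mul_assoc, hU, Matrix.one_mul]
      simp only [Matrix.mul_assoc]
      rw [this]
    rw [h2, Matrix.trace_mul_comm, ← Matrix.mul_assoc, hU, Matrix.one_mul,
      Matrix.diagonal_mul_diagonal, Matrix.trace_diagonal]
    rw [← Finset.sum_filter_add_sum_filter_not Finset.univ (fun i : Fin m => (i : ℕ) < r)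
      (fun i => f i * f i)]
    have hz : ∑ i ∈ Finset.univ.filter (fun i : Fin m => (i : ℕ) < r), f i * f i = 0 := by
      refine Finset.sum_eq_zero fun i hi => ?_
      have : (i : ℕ) < r := by simpa using hi
      simp [hf, he, this]
    rw [hz, zero_add]
    refine Finset.sum_congr rfl fun i hi => ?_
    have : ¬ (i : ℕ) < r := by simpa using hi
    simp [hf, he, this, sq]
  -- conclude via sqrt monotonicity
  rw [frobNorm, frobNorm]
  apply Real.sqrt_le_sqrt
  rw [hLHS]
  exact EY_main hrm U hU d hd hmono G' hG'
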